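/- The unguarded-recursion axiom (Ung2) is sound: for every expression E with at most X free, rec X.(τ.X + E) ≃ rec X.(τ.pri(E)). -/

import Mathlib

namespace PrioCalc

inductive Act where
  | tau : Act
  | vis : ℕ → Act
  | delta : Act
deriving DecidableEq

inductive Expr where
  | nil : Expr
  | var : ℕ → Expr
  | pre : Act → Expr → Expr
  | sum : Expr → Expr → Expr
  | recur : ℕ → Expr → Expr
  | pri : Expr → Expr
deriving DecidableEq

/-- Syntactic substitution of `F` for the free occurrences of variable `x`. -/
def subst : Expr → ℕ → Expr → Expr
  | .nil, _, _ => .nil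
  | .var m, x, F => if m = x then F else .var m
  | .pre γ E, x, F => .pre γ (subst E x F)
  | .sum E G, x, F => .sum (subst E x F) (subst G x F)
  | .recur y E, x, F => if y = x then .recur y E else .recur y (subst E x F)
  | .pri E, x, F => .pri (subst E x F)

/-- `free E x` : `x` occurs free in `E`. -/
def free : Expr → ℕ → Prop
  | .nil, _ => False
  | .var m, x => m = x
  | .pre _ E, x => free E x
  | .sum E G, x => free E x ∨ free G x
  | .recur y E, x => x ≠ y ∧ free E x
  | .pri E, x => free E x

def Closed (E : Expr) : Prop := ∀ x, ¬ free E x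

/-- Standard (non-δ) transitions; these never depend on δ-transitions. -/
inductive StepStd : Expr → Act → Expr → Prop where
  | pre {α : Act} (h : α ≠ Act.delta) (E : Expr) : StepStd (.pre α E) α E
  | sumL {P α P'} (Q : Expr) : StepStd P α P' → StepStd (.sum P Q) α P'
  | sumR {Q α Q'} (P : Expr) : StepStd Q α Q' → StepStd (.sum P Q) α Q'
  | unf {x E γ P'} : StepStd (subst E x (.recur x E)) γ P' → StepStd (.recur x E) γ P'
  | pri {P α P'} : StepStd P α P' → StepStd (.pri P) α P'

def CanTau (P : Expr) : Prop := ∃ P', StepStd P Act.tau P'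

/-- δ-transitions (stratified: the negative premise refers to standard transitions). -/
inductive StepDel : Expr → Expr → Prop where
  | pre (E : Expr) : StepDel (.pre Act.delta E) E
  | sumL {P P'} (Q : Expr) : StepDel P P' → ¬ CanTau Q → StepDel (.sum P Q) P'
  | sumR {Q Q'} (P : Expr) : StepDel Q Q' → ¬ CanTau P → StepDel (.sum P Q) Q'
  | unf {x E P'} : StepDel (subst E x (.recur x E)) P' → StepDel (.recur x E) P'

/-- The full (prioritized) transition relation. -/
def Step (P : Expr) (γ : Act) (Q : Expr) : Prop :=
  if γ = Act.delta then StepDel P Q else StepStd P γ Q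

def TauStar : Expr → Expr → Prop :=
  Relation.ReflTransGen (fun P Q => Step P Act.tau Q)

/-- Weak transition `==γ==>` : τ* γ τ* (at least one γ step). -/
def Weak (P : Expr) (γ : Act) (Q : Expr) : Prop :=
  ∃ P₁ P₂, TauStar P P₁ ∧ Step P₁ γ P₂ ∧ TauStar P₂ Q

/-- Weak transition `==γ̂==>`. -/
def WeakHat (P : Expr) (γ : Act) (Q : Expr) : Prop :=
  if γ = Act.tau then TauStar P Q else Weak P γ Q

def IsWeakBisim (β : Expr → Expr → Prop) : Prop :=
  ∀ P Q, β P Q →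
    (∀ γ P', Step P γ P' → ∃ Q', WeakHat Q γ Q' ∧ β P' Q') ∧
    (∀ γ Q', Step Q γ Q' → ∃ P', WeakHat P γ P' ∧ β P' Q')

/-- Weak bisimilarity `≈`. -/
def WBisim (P Q : Expr) : Prop := ∃ β, IsWeakBisim β ∧ β P Q

/-- Observational congruence `≃`. -/
def ObsCong (P Q : Expr) : Prop :=
  (∀ γ P', Step P γ P' → ∃ Q', Weak Q γ Q' ∧ WBisim P' Q') ∧
  (∀ γ Q', Step Q γ Q' → ∃ P', Weak P γ P' ∧ WBisim P' Q')

/-- Terms of the basic calculus (no occurrence of the auxiliary `pri` operator). -/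
def PriFree : Expr → Prop
  | .nil => True
  | .var _ => True
  | .pre _ E => PriFree E
  | .sum E F => PriFree E ∧ PriFree F
  | .recur _ E => PriFree E
  | .pri _ => False

/-- Every free occurrence of `x` in `E` is (strongly) guarded. -/
def GVar : Expr → ℕ → Prop
  | .nil, _ => True
  | .var m, x => m ≠ x
  | .pre γ E, x => γ = Act.tau → GVar E x
  | .sum E F, x => GVar E x ∧ GVar F x
  | .recur y E, x => y ≠ x → GVar E x
  | .pri E, x => GVar E x

/-- `E` is (strongly) guarded: every recursion subterm is guarded. -/
def Guarded : Expr → Prop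
  | .nil => True
  | .var _ => True
  | .pre _ E => Guarded E
  | .sum E F => Guarded E ∧ Guarded F
  | .recur y E => GVar E y ∧ Guarded E
  | .pri E => Guarded E

/-- Some free occurrence of `x` in `E` is unguarded (not under a non-τ prefix). -/
def UnguardedVar : Expr → ℕ → Prop
  | .nil, _ => False
  | .var m, x => m = x
  | .pre γ E, x => γ = Act.tau ∧ UnguardedVar E x
  | .sum E F, x => UnguardedVar E x ∨ UnguardedVar F x
  | .recur y E, x => y ≠ x ∧ UnguardedVar E x
  | .pri E, x => UnguardedVar E x

/-- `x` is serial in `E` : every subexpression containing `x` free, apart from `x`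
itself, is a prefix, a sum or a recursion. -/
def SerialVar : Expr → ℕ → Prop
  | .nil, _ => True
  | .var _, _ => True
  | .pre _ E, x => SerialVar E x
  | .sum E F, x => SerialVar E x ∧ SerialVar F x
  | .recur y E, x => y = x ∨ SerialVar E x
  | .pri E, x => ¬ free E x

/-- Simultaneous substitution of closed terms for free variables. -/
def msubst : Expr → (ℕ → Expr) → Expr
  | .nil, _ => .nil
  | .var m, σ => σ m
  | .pre γ E, σ => .pre γ (msubst E σ)
  | .sum E F, σ => .sum (msubst E σ) (msubst F σ)
  | .recur y E, σ => .recur y (msubst E (Function.update σ y (.var y)))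
  | .pri E, σ => .pri (msubst E σ)

/-- Observational congruence on open terms (via closed substitutions). -/
def ObsCongO (E F : Expr) : Prop :=
  ∀ σ : ℕ → Expr, (∀ n, Closed (σ n)) → ObsCong (msubst E σ) (msubst F σ)

/-- The axiom system 𝒜. -/
inductive Prov : Expr → Expr → Prop where
  | refl (E) : Prov E E
  | symm {E F} : Prov E F → Prov F E
  | trans {E F G} : Prov E F → Prov F G → Prov E G
  | congPre (γ) {E F} : Prov E F → Prov (.pre γ E) (.pre γ F)
  | congSum {E E' F F'} : Prov E E' → Prov F F' → Prov (.sum E F) (.sum E' F')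
  | congRec (x) {E F} : Prov E F → Prov (.recur x E) (.recur x F)
  | congPri {E F} : Prov E F → Prov (.pri E) (.pri F)
  | a1 (E F) : Prov (.sum E F) (.sum F E)
  | a2 (E F G) : Prov (.sum (.sum E F) G) (.sum E (.sum F G))
  | a3 (E) : Prov (.sum E E) E
  | a4 (E) : Prov (.sum E .nil) E
  | tau1 (γ E) : Prov (.pre γ (.pre Act.tau E)) (.pre γ E)
  | tau2 (E) : Prov (.sum E (.pre Act.tau E)) (.pre Act.tau E)
  | tau3 (γ E F) :
      Prov (.sum (.pre γ (.sum E (.pre Act.tau F))) (.pre γ F))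
           (.pre γ (.sum E (.pre Act.tau F)))
  | pri1 : Prov (.pri .nil) .nil
  | pri2 {α} (h : α ≠ Act.delta) (E) : Prov (.pri (.pre α E)) (.pre α E)
  | pri3 (E) : Prov (.pri (.pre Act.delta E)) .nil
  | pri4 (E F) : Prov (.pri (.sum E F)) (.sum (.pri E) (.pri F))
  | pri5 (E) : Prov (.pri (.pri E)) (.pri E)
  | pri6 (E F) : Prov (.sum (.pre Act.tau E) F) (.sum (.pre Act.tau E) (.pri F))
  | rec1 (x E) : Prov (.recur x E) (subst E x (.recur x E))
  | rec2 {x E F} (hs : SerialVar E x) (hg : GVar E x) :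
      Prov F (subst E x F) → Prov F (.recur x E)
  | ung1 (x E) : Prov (.recur x (.sum (.var x) E)) (.recur x E)
  | ung2 (x E) :
      Prov (.recur x (.sum (.pre Act.tau (.var x)) E)) (.recur x (.pre Act.tau (.pri E)))
  | ung3 (x E F) :
      Prov (.recur x (.sum (.pre Act.tau (.sum (.var x) E)) F))
           (.recur x (.sum (.sum (.pre Act.tau (.var x)) E) F))
  | ung4 (x E F) :
      Prov (.recur x (.sum (.pre Act.tau (.sum (.pri (.var x)) E)) F))
           (.recur x (.sum (.sum (.pre Act.tau (.var x)) E) F))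

/-- Standard equation sets: formal variables are `X i = var i` for `i < n`,
free variables are variables `≥ n`. -/
structure StdEqSet (n : ℕ) where
  pres : Fin n → List (Act × Fin n)
  frees : Fin n → List ℕ
  frees_ge : ∀ i, ∀ w ∈ frees i, n ≤ w

/-- The body `H_i{Ẽ/X̃}` of the `i`-th equation with expressions `Es` for the
formal variables. -/
def instBody {n : ℕ} (S : StdEqSet n) (Es : Fin n → Expr) (i : Fin n) : Expr :=
  (S.pres i).foldr (fun p acc => Expr.sum (Expr.pre p.1 (Es p.2)) acc)
    ((S.frees i).foldr (fun w acc => Expr.sum (Expr.var w) acc) Expr.nil)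

/-- `E` provably satisfies `S` (distinguished variable `X 0`). -/
def ProvSat {n : ℕ} (hn : 0 < n) (E : Expr) (S : StdEqSet n) : Prop :=
  ∃ Es : Fin n → Expr, Es ⟨0, hn⟩ = E ∧
    (∀ i x, free (Es i) x → n ≤ x) ∧
    (∀ i, Prov (Es i) (instBody S Es i))

/-- No equation contains both a τ-prefixed and a δ-prefixed summand. -/
def Prioritized {n : ℕ} (S : StdEqSet n) : Prop :=
  ∀ i, (∃ j, (Act.tau, j) ∈ S.pres i) → ∀ j, (Act.delta, j) ∉ S.pres i

/-- No cycle of unguarded (i.e. τ-prefixed) dependencies. -/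
def EqGuarded {n : ℕ} (S : StdEqSet n) : Prop :=
  ∀ i : Fin n, ¬ Relation.TransGen (fun i j : Fin n => (Act.tau, j) ∈ S.pres i) i i

/-- Delete every δ-prefixed summand from equations that also contain a
τ-prefixed summand. -/
def prioritize {n : ℕ} (S : StdEqSet n) : StdEqSet n where
  pres i := if (S.pres i).any (fun p => decide (p.1 = Act.tau))
            then (S.pres i).filter (fun p => decide (p.1 ≠ Act.delta))
            else S.pres i
  frees := S.frees
  frees_ge := S.frees_ge

/-! ### Auxiliary machinery for the soundness proof of (Ung2) -/

/-- `z` is not used as a recursion binder anywhere in the expression. -/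
def NB (z : ℕ) : Expr → Prop
  | .nil => True
  | .var _ => True
  | .pre _ E => NB z E
  | .sum E F => NB z E ∧ NB z F
  | .recur y E => y ≠ z ∧ NB z E
  | .pri E => NB z E

/-- An upper bound on all variables (free or binding) occurring in an expression. -/
def maxV : Expr → ℕ
  | .nil => 0
  | .var m => m
  | .pre _ E => maxV E
  | .sum E F => max (maxV E) (maxV F)
  | .recur y E => max y (maxV E)
  | .pri E => maxV E

lemma fresh_not_free {G : Expr} {z : ℕ} (h : maxV G < z) : ¬ free G z := by
  induction G with
  | nil => simp [free]
  | var m => simp [maxV] at h; simp [free]; omega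
  | pre α E ih => exact ih h
  | sum E F ihE ihF =>
    simp [maxV] at h
    simp [free]; exact ⟨ihE h.1, ihF h.2⟩
  | recur y E ih =>
    simp [maxV] at h
    simp [free]; intro _; exact ih h.2
  | pri E ih => exact ih h

lemma fresh_NB {G : Expr} {z : ℕ} (h : maxV G < z) : NB z G := by
  induction G with
  | nil => trivial
  | var m => trivial
  | pre α E ih => exact ih h
  | sum E F ihE ihF => simp [maxV] at h; exact ⟨ihE h.1, ihF h.2⟩
  | recur y E ih => simp [maxV] at h; exact ⟨by omega, ih h.2⟩
  | pri E ih => exact ih h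

lemma subst_not_free {G : Expr} {y : ℕ} (h : ¬ free G y) (F : Expr) : subst G y F = G := by
  induction G with
  | nil => rfl
  | var m => simp [free] at h; simp [subst, h]
  | pre α E ih => simp [free] at h; simp [subst, ih h]
  | sum E G ihE ihG =>
    have h1 : ¬ free E y := fun hf => h (Or.inl hf)
    have h2 : ¬ free G y := fun hf => h (Or.inr hf)
    simp [subst, ihE h1, ihG h2]
  | recur w E ih =>
    by_cases hw : w = y
    · simp [subst, hw]
    · have hnf : ¬ free E y := fun hf => h ⟨Ne.symm hw, hf⟩
      simp [subst, hw, ih hnf]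
  | pri E ih => simp [free] at h; simp [subst, ih h]

lemma NB_subst {z : ℕ} {G F : Expr} (hG : NB z G) (hF : NB z F) (y : ℕ) :
    NB z (subst G y F) := by
  induction G with
  | nil => trivial
  | var m =>
    by_cases hm : m = y
    · simpa [subst, hm] using hF
    · simp [subst, hm]; trivial
  | pre α E ih => exact ih hG
  | sum E G ihE ihG => exact ⟨ihE hG.1, ihG hG.2⟩
  | recur w E ih =>
    by_cases hw : w = y
    · simpa [subst, hw] using hG
    · exact (by simpa [subst, hw, NB] using (⟨hG.1, ih hG.2⟩ : w ≠ z ∧ NB z (subst E y F)))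
  | pri E ih => exact ih hG

lemma subst_comm {z y : ℕ} (hzy : z ≠ y) {R : Expr} (hR : Closed R) (F : Expr) :
    ∀ {G}, NB z G → subst (subst G y F) z R = subst (subst G z R) y (subst F z R) := by
  intro G
  induction G with
  | nil => intro _; rfl
  | var m =>
    intro _
    by_cases hm : m = y
    · simp [subst, hm, Ne.symm hzy]
    · by_cases hmz : m = z
      · simp [subst, hm, hmz, hzy, subst_not_free (hR y)]
      · simp [subst, hm, hmz]
  | pre α E ih => intro h; simp [subst, ih h]
  | sum E G ihE ihG => intro h; simp [subst, ihE h.1, ihG h.2]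
  | recur w E ih =>
    intro h
    obtain ⟨hwz, hE⟩ := h
    by_cases hwy : w = y
    · subst hwy
      simp [subst, hwz]
    · simp [subst, hwy, hwz, ih hE]
  | pri E ih => intro h; simp [subst, ih h]

lemma step_NB {z : ℕ} {G γ G'} (h : StepStd G γ G') (hNB : NB z G) : NB z G' := by
  induction h with
  | pre hα E => exact hNB
  | sumL Q hs ih => exact ih hNB.1
  | sumR P hs ih => exact ih hNB.2
  | unf hs ih => exact ih (NB_subst hNB.2 hNB _)
  | pri hs ih => exact ih hNB

lemma step_compat {z : ℕ} {S : Expr} (hS : Closed S) {G γ G'} (h : StepStd G γ G') :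
    NB z G → StepStd (subst G z S) γ (subst G' z S) := by
  induction h with
  | pre hα E => intro _; exact StepStd.pre hα _
  | sumL Q hs ih => intro hNB; exact StepStd.sumL _ (ih hNB.1)
  | sumR P hs ih => intro hNB; exact StepStd.sumR _ (ih hNB.2)
  | @unf y G₁ γ P' hs ih =>
    intro hNB
    obtain ⟨hyz, hG₁⟩ := hNB
    have := ih (NB_subst (F := .recur y G₁) hG₁ ⟨hyz, hG₁⟩ _)
    rw [subst_comm (Ne.symm hyz) hS _ hG₁] at this
    simp only [subst, if_neg hyz] at this ⊢
    exact StepStd.unf this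
  | pri hs ih => intro hNB; exact StepStd.pri (ih hNB)

/-- `z` has an unguarded (top-level reachable) occurrence. -/
inductive UnG (z : ℕ) : Expr → Prop where
  | var : UnG z (.var z)
  | sumL {G} (H : Expr) : UnG z G → UnG z (.sum G H)
  | sumR {H} (G : Expr) : UnG z H → UnG z (.sum G H)
  | unf {y G} : UnG z (subst G y (.recur y G)) → UnG z (.recur y G)
  | pri {G} : UnG z G → UnG z (.pri G)

lemma unG_lift {z : ℕ} {R : Expr} (hR : Closed R) {G : Expr} (hU : UnG z G) :
    NB z G → ∀ {γ A}, StepStd R γ A → StepStd (subst G z R) γ A := by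
  induction hU with
  | var => intro _ γ A h; simpa [subst] using h
  | sumL H hu ih => intro hNB γ A h; exact StepStd.sumL _ (ih hNB.1 h)
  | sumR G hu ih => intro hNB γ A h; exact StepStd.sumR _ (ih hNB.2 h)
  | @unf y G₁ hu ih =>
    intro hNB γ A h
    obtain ⟨hyz, hG₁⟩ := hNB
    have := ih (NB_subst (F := .recur y G₁) hG₁ ⟨hyz, hG₁⟩ _) h
    rw [subst_comm (Ne.symm hyz) hR _ hG₁] at this
    simp only [subst, if_neg hyz] at this ⊢
    exact StepStd.unf this
  | pri hu ih => intro hNB γ A h; exact StepStd.pri (ih hNB h)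

/-- Decomposition of a standard step of `G[R]`. -/
lemma step_decomp {z : ℕ} {R : Expr} (hR : Closed R) :
    ∀ {T γ A}, StepStd T γ A → ∀ {G}, NB z G → T = subst G z R →
    (∃ G', StepStd G γ G' ∧ A = subst G' z R) ∨ (UnG z G ∧ StepStd R γ A) := by
  intro T γ A h
  induction h with
  | @pre α hα E₁ =>
    intro G hNB hEq
    cases G with
    | nil => simp [subst] at hEq
    | var m =>
      by_cases hm : m = z
      · subst hm
        simp [subst] at hEq
        exact Or.inr ⟨UnG.var, hEq ▸ StepStd.pre hα E₁⟩
      · simp [subst, hm] at hEq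
    | pre α' G₁ =>
      simp only [subst, Expr.pre.injEq] at hEq
      obtain ⟨rfl, rfl⟩ := hEq
      exact Or.inl ⟨G₁, StepStd.pre hα G₁, rfl⟩
    | sum G₁ G₂ => simp [subst] at hEq
    | recur w G₁ =>
      by_cases hw : w = z <;> simp [subst, hw] at hEq
    | pri G₁ => simp [subst] at hEq
  | @sumL P₁ γ P' Q₁ hs ih =>
    intro G hNB hEq
    cases G with
    | nil => simp [subst] at hEq
    | var m =>
      by_cases hm : m = z
      · subst hm
        simp [subst] at hEq
        exact Or.inr ⟨UnG.var, hEq ▸ StepStd.sumL _ hs⟩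
      · simp [subst, hm] at hEq
    | pre α' G₁ => simp [subst] at hEq
    | sum G₁ G₂ =>
      simp only [subst, Expr.sum.injEq] at hEq
      obtain ⟨h1, h2⟩ := hEq
      rcases ih hNB.1 h1 with ⟨G', hs', hA⟩ | ⟨hu, hstep⟩
      · exact Or.inl ⟨G', StepStd.sumL _ hs', hA⟩
      · exact Or.inr ⟨UnG.sumL _ hu, hstep⟩
    | recur w G₁ =>
      by_cases hw : w = z <;> simp [subst, hw] at hEq
    | pri G₁ => simp [subst] at hEq
  | @sumR Q₁ γ Q' P₁ hs ih =>
    intro G hNB hEq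
    cases G with
    | nil => simp [subst] at hEq
    | var m =>
      by_cases hm : m = z
      · subst hm
        simp [subst] at hEq
        exact Or.inr ⟨UnG.var, hEq ▸ StepStd.sumR _ hs⟩
      · simp [subst, hm] at hEq
    | pre α' G₁ => simp [subst] at hEq
    | sum G₁ G₂ =>
      simp only [subst, Expr.sum.injEq] at hEq
      obtain ⟨h1, h2⟩ := hEq
      rcases ih hNB.2 h2 with ⟨G', hs', hA⟩ | ⟨hu, hstep⟩
      · exact Or.inl ⟨G', StepStd.sumR _ hs', hA⟩
      · exact Or.inr ⟨UnG.sumR _ hu, hstep⟩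
    | recur w G₁ =>
      by_cases hw : w = z <;> simp [subst, hw] at hEq
    | pri G₁ => simp [subst] at hEq
  | @unf y E₁ γ P' hs ih =>
    intro G hNB hEq
    cases G with
    | nil => simp [subst] at hEq
    | var m =>
      by_cases hm : m = z
      · subst hm
        simp [subst] at hEq
        exact Or.inr ⟨UnG.var, hEq ▸ StepStd.unf hs⟩
      · simp [subst, hm] at hEq
    | pre α' G₁ => simp [subst] at hEq
    | sum G₁ G₂ => simp [subst] at hEq
    | recur w G₁ =>
      obtain ⟨hwz, hG₁⟩ := hNB
      simp only [subst, if_neg hwz, Expr.recur.injEq] at hEq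
      obtain ⟨rfl, rfl⟩ := hEq
      have hcomm := subst_comm (G := G₁) (Ne.symm hwz) hR (.recur y G₁) hG₁
      simp only [subst, if_neg hwz] at hcomm
      rcases ih (NB_subst (F := .recur y G₁) hG₁ ⟨hwz, hG₁⟩ _) hcomm.symm with ⟨G', hs', hA⟩ | ⟨hu, hstep⟩
      · exact Or.inl ⟨G', StepStd.unf hs', hA⟩
      · exact Or.inr ⟨UnG.unf hu, hstep⟩
    | pri G₁ => simp [subst] at hEq
  | @pri P₁ γ P' hs ih =>
    intro G hNB hEq
    cases G with
    | nil => simp [subst] at hEq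
    | var m =>
      by_cases hm : m = z
      · subst hm
        simp [subst] at hEq
        exact Or.inr ⟨UnG.var, hEq ▸ StepStd.pri hs⟩
      · simp [subst, hm] at hEq
    | pre α' G₁ => simp [subst] at hEq
    | sum G₁ G₂ => simp [subst] at hEq
    | recur w G₁ =>
      by_cases hw : w = z <;> simp [subst, hw] at hEq
    | pri G₁ =>
      simp only [subst, Expr.pri.injEq] at hEq
      rcases ih (G := G₁) hNB hEq with ⟨G', hs', hA⟩ | ⟨hu, hstep⟩
      · exact Or.inl ⟨G', StepStd.pri hs', hA⟩
      · exact Or.inr ⟨UnG.pri hu, hstep⟩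

lemma canTau_transfer {z : ℕ} {R S : Expr} (hR : Closed R) (hS : Closed S)
    (hSt : CanTau S) {G : Expr} (hNB : NB z G) :
    CanTau (subst G z R) → CanTau (subst G z S) := by
  rintro ⟨A, hA⟩
  rcases step_decomp hR hA hNB rfl with ⟨G', hs', _⟩ | ⟨hu, _⟩
  · exact ⟨_, step_compat hS hs' hNB⟩
  · obtain ⟨B, hB⟩ := hSt
    exact ⟨B, unG_lift hS hu hNB hB⟩

/-- Transfer of δ-steps between `G[R]` and `G[S]`. -/
lemma del_transfer {z : ℕ} {R S : Expr} (hR : Closed R) (hS : Closed S)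
    (hRt : CanTau R) (hSt : CanTau S) (hRnd : ∀ A, ¬ StepDel R A) :
    ∀ {T A}, StepDel T A → ∀ {G}, NB z G → T = subst G z R →
    ∃ G', NB z G' ∧ A = subst G' z R ∧ StepDel (subst G z S) (subst G' z S) := by
  intro T A h
  induction h with
  | pre E₁ =>
    intro G hNB hEq
    cases G with
    | nil => simp [subst] at hEq
    | var m =>
      by_cases hm : m = z
      · subst hm; simp [subst] at hEq
        exact absurd (hEq ▸ StepDel.pre E₁) (hRnd E₁)
      · simp [subst, hm] at hEq
    | pre α' G₁ =>
      simp only [subst, Expr.pre.injEq] at hEq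
      obtain ⟨rfl, rfl⟩ := hEq
      exact ⟨G₁, hNB, rfl, StepDel.pre _⟩
    | sum G₁ G₂ => simp [subst] at hEq
    | recur w G₁ => by_cases hw : w = z <;> simp [subst, hw] at hEq
    | pri G₁ => simp [subst] at hEq
  | @sumL P₁ P' Q₁ hs hnt ih =>
    intro G hNB hEq
    cases G with
    | nil => simp [subst] at hEq
    | var m =>
      by_cases hm : m = z
      · subst hm; simp [subst] at hEq
        exact absurd (hEq ▸ StepDel.sumL _ hs hnt) (hRnd P')
      · simp [subst, hm] at hEq
    | pre α' G₁ => simp [subst] at hEq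
    | sum G₁ G₂ =>
      simp only [subst, Expr.sum.injEq] at hEq
      obtain ⟨h1, h2⟩ := hEq
      obtain ⟨G', hNB', hA, hstep⟩ := ih hNB.1 h1
      refine ⟨G', hNB', hA, StepDel.sumL _ hstep ?_⟩
      intro hct
      exact hnt (h2 ▸ canTau_transfer hS hR hRt hNB.2 hct)
    | recur w G₁ => by_cases hw : w = z <;> simp [subst, hw] at hEq
    | pri G₁ => simp [subst] at hEq
  | @sumR Q₁ Q' P₁ hs hnt ih =>
    intro G hNB hEq
    cases G with
    | nil => simp [subst] at hEq
    | var m =>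
      by_cases hm : m = z
      · subst hm; simp [subst] at hEq
        exact absurd (hEq ▸ StepDel.sumR _ hs hnt) (hRnd Q')
      · simp [subst, hm] at hEq
    | pre α' G₁ => simp [subst] at hEq
    | sum G₁ G₂ =>
      simp only [subst, Expr.sum.injEq] at hEq
      obtain ⟨h1, h2⟩ := hEq
      obtain ⟨G', hNB', hA, hstep⟩ := ih hNB.2 h2
      refine ⟨G', hNB', hA, StepDel.sumR _ hstep ?_⟩
      intro hct
      exact hnt (h1 ▸ canTau_transfer hS hR hRt hNB.1 hct)
    | recur w G₁ => by_cases hw : w = z <;> simp [subst, hw] at hEq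
    | pri G₁ => simp [subst] at hEq
  | @unf y E₁ P' hs ih =>
    intro G hNB hEq
    cases G with
    | nil => simp [subst] at hEq
    | var m =>
      by_cases hm : m = z
      · subst hm; simp [subst] at hEq
        exact absurd (hEq ▸ StepDel.unf hs) (hRnd P')
      · simp [subst, hm] at hEq
    | pre α' G₁ => simp [subst] at hEq
    | sum G₁ G₂ => simp [subst] at hEq
    | recur w G₁ =>
      obtain ⟨hwz, hG₁⟩ := hNB
      simp only [subst, if_neg hwz, Expr.recur.injEq] at hEq
      obtain ⟨rfl, rfl⟩ := hEq
      have hcommR := subst_comm (G := G₁) (Ne.symm hwz) hR (.recur y G₁) hG₁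
      simp only [subst, if_neg hwz] at hcommR
      obtain ⟨G', hNB', hA, hstep⟩ := ih (NB_subst (F := .recur y G₁) hG₁ ⟨hwz, hG₁⟩ _) hcommR.symm
      have hcommS := subst_comm (G := G₁) (Ne.symm hwz) hS (.recur y G₁) hG₁
      simp only [subst, if_neg hwz] at hcommS
      refine ⟨G', hNB', hA, ?_⟩
      simp only [subst, if_neg hwz]
      exact StepDel.unf (hcommS ▸ hstep)
    | pri G₁ => simp [subst] at hEq

lemma subst_rename {x z : ℕ} (hzx : z ≠ x) {E : Expr} (hNB : NB z E) (hf : ¬ free E z)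
    (R : Expr) : subst (subst E x (.var z)) z R = subst E x R := by
  induction E with
  | nil => rfl
  | var m =>
    by_cases hm : m = x
    · simp [subst, hm]
    · have hmz : m ≠ z := fun h => hf (by simp [free, h])
      simp [subst, hm, hmz]
  | pre α E ih => simp only [subst]; rw [ih hNB hf]
  | sum E F ihE ihF =>
    have h1 : ¬ free E z := fun h => hf (Or.inl h)
    have h2 : ¬ free F z := fun h => hf (Or.inr h)
    simp only [subst]
    rw [ihE hNB.1 h1, ihF hNB.2 h2]
  | recur y E ih =>
    obtain ⟨hyz, hE⟩ := hNB
    by_cases hy : y = x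
    · subst hy
      have hfE : ¬ free E z := fun h => hf ⟨Ne.symm hyz, h⟩
      simp [subst, Ne.symm hzx, hyz, subst_not_free hfE]
    · have hfE : ¬ free E z := fun h => hf ⟨Ne.symm hyz, h⟩
      simp only [subst, if_neg hy, if_neg hyz]
      rw [ih hE hfE]
  | pri E ih => simp only [subst]; rw [ih hNB hf]

/-- The left-hand side `rec x.(τ.x + E)`. -/
def PP (x : ℕ) (E : Expr) : Expr := .recur x (.sum (.pre .tau (.var x)) E)
/-- The right-hand side `rec x.(τ.pri E)`. -/
def QQ (x : ℕ) (E : Expr) : Expr := .recur x (.pre .tau (.pri E))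
/-- `E` with its free occurrences of `x` renamed to the fresh variable `z`. -/
def EE (x z : ℕ) (E : Expr) : Expr := subst E x (.var z)

lemma closed_PP {x : ℕ} {E : Expr} (hE : ∀ y, free E y → y = x) : Closed (PP x E) := by
  intro w hw
  simp only [PP, free] at hw
  obtain ⟨hwx, hw⟩ := hw
  rcases hw with h | h
  · exact hwx h.symm
  · exact hwx (hE w h)

lemma closed_QQ {x : ℕ} {E : Expr} (hE : ∀ y, free E y → y = x) : Closed (QQ x E) := by
  intro w hw
  simp only [QQ, free] at hw
  exact hw.1 (hE w hw.2)

lemma NB_EE {x z : ℕ} {E : Expr} (hNBE : NB z E) : NB z (EE x z E) := NB_subst (F := .var z) hNBE trivial x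

lemma keyP {x z : ℕ} {E : Expr} (hzx : z ≠ x) (hNBE : NB z E) (hfE : ¬ free E z) :
    subst (.sum (.pre .tau (.var x)) E) x (.recur x (.sum (.pre .tau (.var x)) E))
    = subst (.sum (.pre .tau (.var z)) (EE x z E)) z (PP x E) := by
  simp [subst, EE, PP, subst_rename hzx hNBE hfE]

lemma keyQ {x z : ℕ} {E : Expr} (hzx : z ≠ x) (hNBE : NB z E) (hfE : ¬ free E z) :
    subst (.pre .tau (.pri E)) x (.recur x (.pre .tau (.pri E)))
    = .pre .tau (.pri (subst (EE x z E) z (QQ x E))) := by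
  simp [subst, EE, QQ, subst_rename hzx hNBE hfE]

lemma stepPP_tau {x : ℕ} {E : Expr} : StepStd (PP x E) .tau (PP x E) := by
  show StepStd (Expr.recur x (Expr.sum (Expr.pre Act.tau (Expr.var x)) E)) _ _
  apply StepStd.unf
  simp only [subst, if_pos rfl]
  exact StepStd.sumL _ (StepStd.pre (by decide) _)

lemma stepQQ_tau {x z : ℕ} {E : Expr} (hzx : z ≠ x) (hNBE : NB z E) (hfE : ¬ free E z) :
    StepStd (QQ x E) .tau (.pri (subst (EE x z E) z (QQ x E))) := by
  show StepStd (Expr.recur x (Expr.pre Act.tau (Expr.pri E))) _ _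
  apply StepStd.unf
  rw [keyQ hzx hNBE hfE]
  exact StepStd.pre (by decide) _

lemma noDel_PP {x : ℕ} {E : Expr} : ∀ A, ¬ StepDel (PP x E) A := by
  intro A h
  simp only [PP] at h
  cases h with
  | unf h' =>
    simp only [subst, if_pos rfl] at h'
    cases h' with
    | sumL _ h'' _ => cases h''
    | sumR _ h'' hnt => exact hnt ⟨_, StepStd.pre (by decide) _⟩

lemma noDel_QQ {x : ℕ} {E : Expr} : ∀ A, ¬ StepDel (QQ x E) A := by
  intro A h
  simp only [QQ] at h
  cases h with
  | unf h' =>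
    simp only [subst, if_pos rfl] at h'
    cases h'

lemma stepQQ_char {x z : ℕ} {E : Expr} (hzx : z ≠ x) (hNBE : NB z E) (hfE : ¬ free E z)
    {γ A} (h : StepStd (QQ x E) γ A) :
    γ = .tau ∧ A = .pri (subst (EE x z E) z (QQ x E)) := by
  simp only [QQ] at h
  cases h with
  | unf h' =>
    rw [keyQ hzx hNBE hfE] at h'
    cases h'
    exact ⟨rfl, rfl⟩

/-- Full analysis of the standard steps of `G[P]`. -/
lemma stepPP_decomp {x z : ℕ} {E : Expr} (hE : ∀ y, free E y → y = x) (hzx : z ≠ x)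
    (hNBE : NB z E) (hfE : ¬ free E z) :
    ∀ {T γ A}, StepStd T γ A → ∀ {G}, NB z G → T = subst G z (PP x E) →
    (∃ G', StepStd G γ G' ∧ A = subst G' z (PP x E)) ∨
    (UnG z G ∧ ((γ = .tau ∧ A = PP x E) ∨
      ∃ G', NB z G' ∧ A = subst G' z (PP x E) ∧
        StepStd (subst (EE x z E) z (QQ x E)) γ (subst G' z (QQ x E)))) := by
  intro T γ A h
  induction h with
  | @pre α hα E₁ =>
    intro G hNB hEq
    cases G with
    | nil => simp [subst] at hEq
    | var m =>
      by_cases hm : m = z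
      · subst hm; simp [subst, PP] at hEq
      · simp [subst, hm] at hEq
    | pre α' G₁ =>
      simp only [subst, Expr.pre.injEq] at hEq
      obtain ⟨rfl, rfl⟩ := hEq
      exact Or.inl ⟨G₁, StepStd.pre hα G₁, rfl⟩
    | sum G₁ G₂ => simp [subst] at hEq
    | recur w G₁ => by_cases hw : w = z <;> simp [subst, hw, PP] at hEq
    | pri G₁ => simp [subst] at hEq
  | @sumL P₁ γ P' Q₁ hs ih =>
    intro G hNB hEq
    cases G with
    | nil => simp [subst] at hEq
    | var m =>
      by_cases hm : m = z
      · subst hm; simp [subst, PP] at hEq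
      · simp [subst, hm] at hEq
    | pre α' G₁ => simp [subst] at hEq
    | sum G₁ G₂ =>
      simp only [subst, Expr.sum.injEq] at hEq
      obtain ⟨h1, h2⟩ := hEq
      rcases ih hNB.1 h1 with ⟨G', hs', hA⟩ | ⟨hu, pl⟩
      · exact Or.inl ⟨G', StepStd.sumL _ hs', hA⟩
      · exact Or.inr ⟨UnG.sumL _ hu, pl⟩
    | recur w G₁ => by_cases hw : w = z <;> simp [subst, hw, PP] at hEq
    | pri G₁ => simp [subst] at hEq
  | @sumR Q₁ γ Q' P₁ hs ih =>
    intro G hNB hEq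
    cases G with
    | nil => simp [subst] at hEq
    | var m =>
      by_cases hm : m = z
      · subst hm; simp [subst, PP] at hEq
      · simp [subst, hm] at hEq
    | pre α' G₁ => simp [subst] at hEq
    | sum G₁ G₂ =>
      simp only [subst, Expr.sum.injEq] at hEq
      obtain ⟨h1, h2⟩ := hEq
      rcases ih hNB.2 h2 with ⟨G', hs', hA⟩ | ⟨hu, pl⟩
      · exact Or.inl ⟨G', StepStd.sumR _ hs', hA⟩
      · exact Or.inr ⟨UnG.sumR _ hu, pl⟩
    | recur w G₁ => by_cases hw : w = z <;> simp [subst, hw, PP] at hEq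
    | pri G₁ => simp [subst] at hEq
  | @unf y E₁ γ P' hs ih =>
    intro G hNB hEq
    cases G with
    | nil => simp [subst] at hEq
    | var m =>
      by_cases hm : m = z
      · rcases hm.symm with rfl
        simp only [subst, if_pos rfl, PP, Expr.recur.injEq] at hEq
        obtain ⟨rfl, rfl⟩ := hEq
        -- the step is a step of `P` itself
        have hNBB : NB z (Expr.sum (.pre .tau (.var z)) (EE x z E)) :=
          ⟨trivial, NB_EE hNBE⟩
        rcases ih hNBB (keyP hzx hNBE hfE) with ⟨G', hstep, hA⟩ | ⟨_, pl⟩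
        · cases hstep with
          | sumL _ h'' =>
            cases h''
            refine Or.inr ⟨UnG.var, Or.inl ⟨rfl, ?_⟩⟩
            simpa [subst] using hA
          | sumR _ h'' =>
            exact Or.inr ⟨UnG.var, Or.inr ⟨G', step_NB h'' (NB_EE hNBE), hA,
              step_compat (closed_QQ hE) h'' (NB_EE hNBE)⟩⟩
        · exact Or.inr ⟨UnG.var, pl⟩
      · simp [subst, hm] at hEq
    | pre α' G₁ => simp [subst] at hEq
    | sum G₁ G₂ => simp [subst] at hEq
    | recur w G₁ =>
      obtain ⟨hwz, hG₁⟩ := hNB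
      simp only [subst, if_neg hwz, Expr.recur.injEq] at hEq
      obtain ⟨rfl, rfl⟩ := hEq
      have hcomm := subst_comm (G := G₁) (Ne.symm hwz) (closed_PP hE) (.recur y G₁) hG₁
      simp only [subst, if_neg hwz] at hcomm
      rcases ih (NB_subst (F := .recur y G₁) hG₁ ⟨hwz, hG₁⟩ _) hcomm.symm with
        ⟨G', hs', hA⟩ | ⟨hu, pl⟩
      · exact Or.inl ⟨G', StepStd.unf hs', hA⟩
      · exact Or.inr ⟨UnG.unf hu, pl⟩
    | pri G₁ => simp [subst] at hEq
  | @pri P₁ γ P' hs ih =>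
    intro G hNB hEq
    cases G with
    | nil => simp [subst] at hEq
    | var m =>
      by_cases hm : m = z
      · subst hm; simp [subst, PP] at hEq
      · simp [subst, hm] at hEq
    | pre α' G₁ => simp [subst] at hEq
    | sum G₁ G₂ => simp [subst] at hEq
    | recur w G₁ => by_cases hw : w = z <;> simp [subst, hw, PP] at hEq
    | pri G₁ =>
      simp only [subst, Expr.pri.injEq] at hEq
      rcases ih (G := G₁) hNB hEq with ⟨G', hs', hA⟩ | ⟨hu, pl⟩
      · exact Or.inl ⟨G', StepStd.pri hs', hA⟩
      · exact Or.inr ⟨UnG.pri hu, pl⟩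

lemma stepPP_char {x z : ℕ} {E : Expr} (hE : ∀ y, free E y → y = x) (hzx : z ≠ x)
    (hNBE : NB z E) (hfE : ¬ free E z) {γ A} (h : StepStd (PP x E) γ A) :
    (γ = .tau ∧ A = PP x E) ∨
    ∃ G', NB z G' ∧ A = subst G' z (PP x E) ∧
      StepStd (subst (EE x z E) z (QQ x E)) γ (subst G' z (QQ x E)) := by
  have := stepPP_decomp hE hzx hNBE hfE h (G := .var z) trivial (by simp [subst])
  rcases this with ⟨G', hs', _⟩ | ⟨_, pl⟩
  · cases hs'
  · exact pl


lemma step_of_std {γ A B} (h : γ ≠ Act.delta) (hs : StepStd A γ B) : Step A γ B := by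
  unfold Step; rw [if_neg h]; exact hs

lemma std_of_step {γ A B} (h : γ ≠ Act.delta) (hs : Step A γ B) : StepStd A γ B := by
  unfold Step at hs; rwa [if_neg h] at hs

lemma del_of_step {A B} (hs : Step A Act.delta B) : StepDel A B := by
  unfold Step at hs; rwa [if_pos rfl] at hs

lemma step_of_del {A B} (hs : StepDel A B) : Step A Act.delta B := by
  unfold Step; rw [if_pos rfl]; exact hs

lemma weakHat_refl (A : Expr) : WeakHat A Act.tau A := by
  unfold WeakHat; rw [if_pos rfl]; exact Relation.ReflTransGen.refl

lemma weakHat_single {γ A B} (h : γ ≠ Act.delta) (hs : StepStd A γ B) : WeakHat A γ B := by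
  by_cases ht : γ = Act.tau
  · subst ht
    unfold WeakHat; rw [if_pos rfl]
    exact Relation.ReflTransGen.single (step_of_std h hs)
  · unfold WeakHat; rw [if_neg ht]
    exact ⟨A, B, Relation.ReflTransGen.refl, step_of_std h hs, Relation.ReflTransGen.refl⟩

lemma weakHat_two {γ A B C} (h : γ ≠ Act.delta) (h1 : StepStd A Act.tau B)
    (h2 : StepStd B γ C) : WeakHat A γ C := by
  by_cases ht : γ = Act.tau
  · subst ht
    unfold WeakHat; rw [if_pos rfl]
    exact Relation.ReflTransGen.head (step_of_std (by decide) h1)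
      (Relation.ReflTransGen.single (step_of_std h h2))
  · unfold WeakHat; rw [if_neg ht]
    exact ⟨B, C, Relation.ReflTransGen.single (step_of_std (by decide) h1),
      step_of_std h h2, Relation.ReflTransGen.refl⟩

lemma weakHat_del {A B} (hs : StepDel A B) : WeakHat A Act.delta B := by
  unfold WeakHat; rw [if_neg (by decide : Act.delta ≠ Act.tau)]
  exact ⟨A, B, Relation.ReflTransGen.refl, step_of_del hs, Relation.ReflTransGen.refl⟩

lemma ung2_main {x z : ℕ} {E : Expr} (hE : ∀ y, free E y → y = x) (hzx : z ≠ x)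
    (hNBE : NB z E) (hfE : ¬ free E z) : ObsCong (PP x E) (QQ x E) := by
  have hcP : Closed (PP x E) := closed_PP hE
  have hcQ : Closed (QQ x E) := closed_QQ hE
  have hNBE0 : NB z (EE x z E) := NB_EE hNBE
  have hPt : StepStd (PP x E) Act.tau (PP x E) := stepPP_tau
  have hQt : StepStd (QQ x E) Act.tau (.pri (subst (EE x z E) z (QQ x E))) :=
    stepQQ_tau hzx hNBE hfE
  have hPct : CanTau (PP x E) := ⟨_, hPt⟩
  have hQct : CanTau (QQ x E) := ⟨_, hQt⟩
  set β : Expr → Expr → Prop := fun A B =>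
    (A = PP x E ∧ B = .pri (subst (EE x z E) z (QQ x E))) ∨
    ∃ G, NB z G ∧ A = subst G z (PP x E) ∧ B = subst G z (QQ x E) with hβ
  have hbase2 : ∀ G, NB z G → β (subst G z (PP x E)) (subst G z (QQ x E)) :=
    fun G h => Or.inr ⟨G, h, rfl, rfl⟩
  have hbis : IsWeakBisim β := by
    rintro A B (⟨rfl, rfl⟩ | ⟨G, hG, rfl, rfl⟩)
    · constructor
      · -- steps of P, matched by pri(E₀[Q])
        intro γ P' hstep
        by_cases hδ : γ = Act.delta
        · subst hδ
          exact absurd (del_of_step hstep) (noDel_PP P')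
        · have hstd := std_of_step hδ hstep
          rcases stepPP_char hE hzx hNBE hfE hstd with ⟨rfl, rfl⟩ | ⟨G', hG', rfl, hq⟩
          · exact ⟨_, weakHat_refl _, Or.inl ⟨rfl, rfl⟩⟩
          · exact ⟨subst G' z (QQ x E), weakHat_single hδ (StepStd.pri hq), hbase2 G' hG'⟩
      · -- steps of pri(E₀[Q]), matched by P
        intro γ Q' hstep
        by_cases hδ : γ = Act.delta
        · subst hδ
          cases del_of_step hstep
        · have hstd := std_of_step hδ hstep
          cases hstd with
          | pri h' =>
            rcases step_decomp (z := z) hcQ h' hNBE0 rfl with ⟨G', hs', rfl⟩ | ⟨hu, hQs⟩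
            · have hp : StepStd (PP x E) γ (subst G' z (PP x E)) := by
                show StepStd (Expr.recur x (Expr.sum (Expr.pre Act.tau (Expr.var x)) E)) _ _
                apply StepStd.unf
                rw [keyP hzx hNBE hfE]
                exact StepStd.sumR _ (step_compat hcP hs' hNBE0)
              exact ⟨_, weakHat_single hδ hp, hbase2 G' (step_NB hs' hNBE0)⟩
            · obtain ⟨rfl, rfl⟩ := stepQQ_char hzx hNBE hfE hQs
              exact ⟨PP x E, weakHat_refl _, Or.inl ⟨rfl, rfl⟩⟩
    · constructor
      · -- steps of G[P]
        intro γ P' hstep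
        by_cases hδ : γ = Act.delta
        · subst hδ
          obtain ⟨G', hG', rfl, hq⟩ :=
            del_transfer hcP hcQ hPct hQct noDel_PP (del_of_step hstep) hG rfl
          exact ⟨_, weakHat_del hq, hbase2 G' hG'⟩
        · have hstd := std_of_step hδ hstep
          rcases stepPP_decomp hE hzx hNBE hfE hstd hG rfl with
            ⟨G', hs', rfl⟩ | ⟨hu, pl⟩
          · exact ⟨_, weakHat_single hδ (step_compat hcQ hs' hG), hbase2 G' (step_NB hs' hG)⟩
          · rcases pl with ⟨rfl, rfl⟩ | ⟨G', hG', rfl, hq⟩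
            · have h1 : StepStd (subst G z (QQ x E)) Act.tau
                  (.pri (subst (EE x z E) z (QQ x E))) := unG_lift hcQ hu hG hQt
              exact ⟨_, weakHat_single (by decide) h1, Or.inl ⟨rfl, rfl⟩⟩
            · have h1 : StepStd (subst G z (QQ x E)) Act.tau
                  (.pri (subst (EE x z E) z (QQ x E))) := unG_lift hcQ hu hG hQt
              exact ⟨_, weakHat_two hδ h1 (StepStd.pri hq), hbase2 G' hG'⟩
      · -- steps of G[Q]
        intro γ Q' hstep
        by_cases hδ : γ = Act.delta
        · subst hδ
          obtain ⟨G', hG', rfl, hp⟩ :=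
            del_transfer hcQ hcP hQct hPct noDel_QQ (del_of_step hstep) hG rfl
          exact ⟨_, weakHat_del hp, hbase2 G' hG'⟩
        · have hstd := std_of_step hδ hstep
          rcases step_decomp (z := z) hcQ hstd hG rfl with ⟨G', hs', rfl⟩ | ⟨hu, hQs⟩
          · exact ⟨_, weakHat_single hδ (step_compat hcP hs' hG), hbase2 G' (step_NB hs' hG)⟩
          · obtain ⟨rfl, rfl⟩ := stepQQ_char hzx hNBE hfE hQs
            have h1 : StepStd (subst G z (PP x E)) Act.tau (PP x E) :=
              unG_lift hcP hu hG hPt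
            exact ⟨PP x E, weakHat_single (by decide) h1, Or.inl ⟨rfl, rfl⟩⟩
  constructor
  · intro γ P' hstep
    by_cases hδ : γ = Act.delta
    · subst hδ
      exact absurd (del_of_step hstep) (noDel_PP P')
    · have hstd := std_of_step hδ hstep
      rcases stepPP_char hE hzx hNBE hfE hstd with ⟨rfl, rfl⟩ | ⟨G', hG', rfl, hq⟩
      · refine ⟨.pri (subst (EE x z E) z (QQ x E)), ?_, ⟨β, hbis, Or.inl ⟨rfl, rfl⟩⟩⟩
        exact ⟨QQ x E, _, Relation.ReflTransGen.refl, step_of_std (by decide) hQt,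
          Relation.ReflTransGen.refl⟩
      · refine ⟨subst G' z (QQ x E), ?_, ⟨β, hbis, hbase2 G' hG'⟩⟩
        exact ⟨.pri (subst (EE x z E) z (QQ x E)), subst G' z (QQ x E),
          Relation.ReflTransGen.single (step_of_std (by decide) hQt),
          step_of_std hδ (StepStd.pri hq), Relation.ReflTransGen.refl⟩
  · intro γ Q' hstep
    by_cases hδ : γ = Act.delta
    · subst hδ
      exact absurd (del_of_step hstep) (noDel_QQ Q')
    · have hstd := std_of_step hδ hstep
      obtain ⟨rfl, rfl⟩ := stepQQ_char hzx hNBE hfE hstd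
      refine ⟨PP x E, ?_, ⟨β, hbis, Or.inl ⟨rfl, rfl⟩⟩⟩
      exact ⟨PP x E, PP x E, Relation.ReflTransGen.refl, step_of_std (by decide) hPt,
        Relation.ReflTransGen.refl⟩

/-- soundness of (Ung2): rec X.(τ.X + E) ≃ rec X.(τ.pri(E)). -/
theorem ung2_sound (x : ℕ) (E : Expr) (hE : ∀ y, free E y → y = x) :
    ObsCong (.recur x (.sum (.pre Act.tau (.var x)) E))
            (.recur x (.pre Act.tau (.pri E))) := by
  have := ung2_main (z := maxV E + x + 1) hE (by omega)
    (fresh_NB (by omega)) (fresh_not_free (by omega))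
  simpa [PP, QQ] using this

end PrioCalc
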